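/- Let p be a prime and a a natural number with base-p digits a_0, a_1, a_2, .... Suppose a_t ≠ p-1 for some t, and let m = min{ t : a_t < p-1 }. Then p does not divide C(a + p^m, p^m), while p divides C(a + p^{d'}, p^{d'}) for every d' < m. -/

import Mathlib

lemma digit_mod_pow_succ (p a i : ℕ) :
    a % p ^ (i + 1) = a % p ^ i + p ^ i * (a / p ^ i % p) := by
  rw [pow_succ, Nat.mod_mul]

/-- If `m` is the least index whose base-`p` digit of `a` is `< p-1`, then
`p ∤ C(a + p^m, p^m)` while `p ∣ C(a + p^{d'}, p^{d'})` for all `d' < m`. -/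
theorem stmt_2 (p a m : ℕ) (hp : p.Prime)
    (hm : a / p ^ m % p < p - 1)
    (hmin : ∀ t : ℕ, t < m → a / p ^ t % p = p - 1) :
    ¬ p ∣ Nat.choose (a + p ^ m) (p ^ m) ∧
      ∀ d' : ℕ, d' < m → p ∣ Nat.choose (a + p ^ d') (p ^ d') := by
  have hp1 : 1 < p := hp.one_lt
  obtain ⟨q, rfl⟩ : ∃ q, p = q + 2 := ⟨p - 2, by omega⟩
  constructor
  · -- no carries when adding (q + 2)^m to a
    rw [← emultiplicity_eq_zero]
    rw [hp.emultiplicity_choose' (lt_add_one (Nat.log (q + 2) (a + (q + 2) ^ m)))]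
    norm_cast
    rw [Finset.card_eq_zero, Finset.filter_eq_empty_iff]
    intro i hi
    rw [Finset.mem_Ico] at hi
    push_neg
    rcases le_or_gt i m with him | him
    · have hz : (q + 2) ^ m % (q + 2) ^ i = 0 := Nat.eq_zero_of_dvd_of_lt (pow_dvd_pow (q + 2) him) |> fun _ => Nat.mod_eq_zero_of_dvd (pow_dvd_pow (q + 2) him)
      rw [hz, zero_add]
      exact Nat.mod_lt _ (pow_pos hp.pos i)
    · -- i ≥ m + 1 : show a % (q + 2) ^ i + (q + 2) ^ m < (q + 2) ^ i
      have key : ∀ j : ℕ, a % (q + 2) ^ (m + 1 + j) + (q + 2) ^ m < (q + 2) ^ (m + 1 + j) := by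
        intro j
        induction j with
        | zero =>
          have h1 : a % (q + 2) ^ (m + 1) = a % (q + 2) ^ m + (q + 2) ^ m * (a / (q + 2) ^ m % (q + 2)) :=
            digit_mod_pow_succ (q + 2) a m
          have h2 : a / (q + 2) ^ m % (q + 2) ≤ (q + 2) - 2 := by omega
          have h3 : a % (q + 2) ^ m < (q + 2) ^ m := Nat.mod_lt _ (pow_pos hp.pos m)
          have h4 : (q + 2) ^ m * (a / (q + 2) ^ m % (q + 2)) ≤ (q + 2) ^ m * ((q + 2) - 2) :=
            Nat.mul_le_mul_left _ h2
          have h5 : (q + 2) ^ (m + 1) = (q + 2) ^ m * (q + 2) := pow_succ (q + 2) m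
          have h2' : a / (q + 2) ^ m % (q + 2) ≤ q := by omega
          nlinarith [pow_pos hp.pos m]
        | succ j ih =>
          have h1 : a % (q + 2) ^ (m + 1 + j + 1) = a % (q + 2) ^ (m + 1 + j)
              + (q + 2) ^ (m + 1 + j) * (a / (q + 2) ^ (m + 1 + j) % (q + 2)) :=
            digit_mod_pow_succ (q + 2) a (m + 1 + j)
          have h2 : a / (q + 2) ^ (m + 1 + j) % (q + 2) ≤ (q + 2) - 1 := by
            have := Nat.mod_lt (a / (q + 2) ^ (m + 1 + j)) hp.pos; omega
          have h4 : (q + 2) ^ (m + 1 + j) * (a / (q + 2) ^ (m + 1 + j) % (q + 2))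
              ≤ (q + 2) ^ (m + 1 + j) * ((q + 2) - 1) := Nat.mul_le_mul_left _ h2
          have h5 : (q + 2) ^ (m + 1 + j + 1) = (q + 2) ^ (m + 1 + j) * (q + 2) := pow_succ _ _
          have hpos : 0 < (q + 2) ^ (m + 1 + j) := pow_pos hp.pos _
          show a % (q + 2) ^ (m + 1 + (j + 1)) + (q + 2) ^ m < (q + 2) ^ (m + 1 + (j + 1))
          have e : m + 1 + (j + 1) = m + 1 + j + 1 := by ring
          rw [e]
          have h2' : a / (q + 2) ^ (m + 1 + j) % (q + 2) ≤ q + 1 := by omega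
          nlinarith
      obtain ⟨j, rfl⟩ : ∃ j, i = m + 1 + j := ⟨i - (m + 1), by omega⟩
      have hmlt : (q + 2) ^ m < (q + 2) ^ (m + 1 + j) :=
        Nat.pow_lt_pow_right hp1 (by omega)
      rw [Nat.mod_eq_of_lt hmlt]
      have := key j
      omega
  · intro d hd
    rw [← dvd_iff_emultiplicity_pos,
      hp.emultiplicity_choose' (lt_add_one (Nat.log (q + 2) (a + (q + 2) ^ d)))]
    -- carry at position d + 1
    have hdig : a / (q + 2) ^ d % (q + 2) = q + 1 := by have := hmin d hd; omega
    have hge : (q + 1) * (q + 2) ^ d ≤ a := by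
      have h1 : q + 1 ≤ a / (q + 2) ^ d := hdig ▸ Nat.mod_le _ _
      calc (q + 1) * (q + 2) ^ d ≤ a / (q + 2) ^ d * (q + 2) ^ d := Nat.mul_le_mul_right _ h1
        _ ≤ a := Nat.div_mul_le_self _ _
    have hsum : (q + 2) ^ (d + 1) ≤ (q + 2) ^ d % (q + 2) ^ (d + 1) + a % (q + 2) ^ (d + 1) := by
      have h1 : (q + 2) ^ d % (q + 2) ^ (d + 1) = (q + 2) ^ d :=
        Nat.mod_eq_of_lt (Nat.pow_lt_pow_right hp1 (lt_add_one d))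
      have h2 : a % (q + 2) ^ (d + 1) = a % (q + 2) ^ d + (q + 2) ^ d * (q + 1) := by
        rw [digit_mod_pow_succ, hdig]
      have h3 : (q + 2) ^ (d + 1) = (q + 2) ^ d * (q + 2) := pow_succ _ d
      rw [h1, h2, h3]
      nlinarith [Nat.zero_le (a % (q + 2) ^ d)]
    have hmem : d + 1 ∈ Finset.filter (fun i => (q + 2) ^ i ≤ (q + 2) ^ d % (q + 2) ^ i + a % (q + 2) ^ i)
        (Finset.Ico 1 (Nat.log (q + 2) (a + (q + 2) ^ d) + 1)) := by
      rw [Finset.mem_filter, Finset.mem_Ico]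
      refine ⟨⟨by omega, ?_⟩, hsum⟩
      have hle : (q + 2) ^ (d + 1) ≤ a + (q + 2) ^ d := by
        have h3 : (q + 2) ^ (d + 1) = (q + 2) ^ d * (q + 2) := pow_succ _ d
        have := pow_pos hp.pos d
        nlinarith
      have : d + 1 ≤ Nat.log (q + 2) (a + (q + 2) ^ d) :=
        (Nat.le_log_iff_pow_le hp1 (by positivity)).mpr hle
      omega
    have hcard : 0 < (Finset.filter (fun i => (q + 2) ^ i ≤ (q + 2) ^ d % (q + 2) ^ i + a % (q + 2) ^ i)
        (Finset.Ico 1 (Nat.log (q + 2) (a + (q + 2) ^ d) + 1))).card :=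
      Finset.card_pos.mpr ⟨d + 1, hmem⟩
    exact_mod_cast hcard
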